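/- Let n_1, n_2 be positive integers with n_1 ≤ n_2 and n_1 odd. Then there exists an arrangement A of the n_1 × n_2 matrix with spread(A) = (n_1+1)n_2/2 − 1. -/

import Mathlib

/-- The spread of an arrangement of an `n₁ × n₂` matrix (a bijection from cells
to `{0,…,n₁n₂ − 1}`, a zero-based version of `{1,…,n₁n₂}`): the maximum
difference of values over all pairs of cells in a common row or column. -/
def spread2 {n₁ n₂ : ℕ} (A : Fin n₁ × Fin n₂ ≃ Fin (n₁ * n₂)) : ℕ :=
  Finset.sup Finset.univ
    (fun p : (Fin n₁ × Fin n₂) × (Fin n₁ × Fin n₂) =>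
      if p.1.1 = p.2.1 ∨ p.1.2 = p.2.2 then Nat.dist (A p.1) (A p.2) else 0)

lemma dist_le_of_bounds {L S a b : ℕ} (h1 : L ≤ a) (h2 : a ≤ L + S) (h3 : L ≤ b)
    (h4 : b ≤ L + S) : Nat.dist a b ≤ S := by
  simp only [Nat.dist]; omega

theorem exists_arrangement (n₁ n₂ S : ℕ) (f : ℕ → ℕ → ℕ) (g : ℕ → ℕ × ℕ)
    (rmin cmin : ℕ → ℕ)
    (hlt : ∀ l j, l < n₁ → j < n₂ → f l j < n₁ * n₂)
    (hg : ∀ l j, l < n₁ → j < n₂ → g (f l j) = (l, j))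
    (hrow1 : ∀ l j, l < n₁ → j < n₂ → rmin l ≤ f l j)
    (hrow2 : ∀ l j, l < n₁ → j < n₂ → f l j ≤ rmin l + S)
    (hcol1 : ∀ l j, l < n₁ → j < n₂ → cmin j ≤ f l j)
    (hcol2 : ∀ l j, l < n₁ → j < n₂ → f l j ≤ cmin j + S)
    (l₀ j₀ j₀' : ℕ) (hl₀ : l₀ < n₁) (hj₀ : j₀ < n₂) (hj₀' : j₀' < n₂)
    (hatt : f l₀ j₀ + S = f l₀ j₀') :
    ∃ A : Fin n₁ × Fin n₂ ≃ Fin (n₁ * n₂), spread2 A = S := by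
  have hF : ∀ p : Fin n₁ × Fin n₂, f p.1.1 p.2.1 < n₁ * n₂ := fun p => hlt _ _ p.1.2 p.2.2
  let F : Fin n₁ × Fin n₂ → Fin (n₁ * n₂) := fun p => ⟨f p.1.1 p.2.1, hF p⟩
  have hinj : Function.Injective F := by
    intro a b hab
    have hval : f a.1.1 a.2.1 = f b.1.1 b.2.1 := congrArg Fin.val hab
    have := congrArg g hval
    rw [hg _ _ a.1.2 a.2.2, hg _ _ b.1.2 b.2.2] at this
    obtain ⟨h1, h2⟩ := Prod.mk.injEq _ _ _ _ ▸ this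
    · exact Prod.ext (Fin.ext h1) (Fin.ext h2)
  have hbij : Function.Bijective F :=
    (Fintype.bijective_iff_injective_and_card F).2 ⟨hinj, by simp⟩
  refine ⟨Equiv.ofBijective F hbij, ?_⟩
  unfold spread2
  apply le_antisymm
  · apply Finset.sup_le
    rintro ⟨p, q⟩ -
    by_cases hc : p.1 = q.1 ∨ p.2 = q.2
    · rw [if_pos hc]
      show Nat.dist (f p.1.1 p.2.1) (f q.1.1 q.2.1) ≤ S
      rcases hc with hc | hc
      · have hpq : p.1.1 = q.1.1 := congrArg Fin.val hc
        have hb1 : rmin p.1.1 ≤ f q.1.1 q.2.1 := by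
          rw [hpq]; exact hrow1 _ _ q.1.2 q.2.2
        have hb2 : f q.1.1 q.2.1 ≤ rmin p.1.1 + S := by
          rw [hpq]; exact hrow2 _ _ q.1.2 q.2.2
        exact dist_le_of_bounds (hrow1 _ _ p.1.2 p.2.2) (hrow2 _ _ p.1.2 p.2.2) hb1 hb2
      · have hpq : p.2.1 = q.2.1 := congrArg Fin.val hc
        have hb1 : cmin p.2.1 ≤ f q.1.1 q.2.1 := by
          rw [hpq]; exact hcol1 _ _ q.1.2 q.2.2
        have hb2 : f q.1.1 q.2.1 ≤ cmin p.2.1 + S := by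
          rw [hpq]; exact hcol2 _ _ q.1.2 q.2.2
        exact dist_le_of_bounds (hcol1 _ _ p.1.2 p.2.2) (hcol2 _ _ p.1.2 p.2.2) hb1 hb2
    · rw [if_neg hc]
      exact Nat.zero_le S
  · have hmem := Finset.le_sup (f := fun p : (Fin n₁ × Fin n₂) × (Fin n₁ × Fin n₂) =>
      if p.1.1 = p.2.1 ∨ p.1.2 = p.2.2 then
        Nat.dist ((Equiv.ofBijective F hbij) p.1) ((Equiv.ofBijective F hbij) p.2) else 0)
      (Finset.mem_univ ((⟨⟨l₀, hl₀⟩, ⟨j₀, hj₀⟩⟩, ⟨⟨l₀, hl₀⟩, ⟨j₀', hj₀'⟩⟩) :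
        (Fin n₁ × Fin n₂) × (Fin n₁ × Fin n₂)))
    refine le_trans ?_ hmem
    show S ≤ (if (⟨l₀, hl₀⟩ : Fin n₁) = ⟨l₀, hl₀⟩ ∨ (⟨j₀, hj₀⟩ : Fin n₂) = ⟨j₀', hj₀'⟩ then
      Nat.dist (f l₀ j₀) (f l₀ j₀') else 0)
    rw [if_pos (Or.inl rfl)]
    simp only [Nat.dist]; omega


lemma ncDivH {l j h : ℕ} (hj : j < h) : (l * h + j) / h = l := by
  have h0 : 0 < h := by omega
  rw [add_comm, Nat.add_mul_div_right _ _ h0, Nat.div_eq_of_lt hj]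
  omega

lemma ncModH {l j h : ℕ} (hj : j < h) : (l * h + j) % h = j := by
  rw [add_comm, Nat.add_mul_mod_self_right, Nat.mod_eq_of_lt hj]

def fE (n₁ h l j : ℕ) : ℕ := if j < h then l * h + j else n₁ * h + (l * h + (j - h))

def gE (n₁ h v : ℕ) : ℕ × ℕ :=
  if v < n₁ * h then (v / h, v % h) else ((v - n₁ * h) / h, h + (v - n₁ * h) % h)

section EvenCase
variable {n₁ h : ℕ}

lemma fE_lt (h1 : 1 ≤ n₁) (hh : 1 ≤ h) {l j : ℕ} (hl : l < n₁) (hj : j < 2 * h) :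
    fE n₁ h l j < n₁ * (2 * h) := by
  have e1 : n₁ * (2 * h) = 2 * (n₁ * h) := by ring
  have e2 : l * h + h ≤ n₁ * h := by
    calc l * h + h = (l + 1) * h := by ring
    _ ≤ n₁ * h := Nat.mul_le_mul_right _ (by omega)
  unfold fE
  split_ifs with hjh <;> omega

lemma gE_fE (h1 : 1 ≤ n₁) (hh : 1 ≤ h) {l j : ℕ} (hl : l < n₁) (hj : j < 2 * h) :
    gE n₁ h (fE n₁ h l j) = (l, j) := by
  have e2 : l * h + h ≤ n₁ * h := by
    calc l * h + h = (l + 1) * h := by ring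
    _ ≤ n₁ * h := Nat.mul_le_mul_right _ (by omega)
  by_cases hjh : j < h
  · have hv : fE n₁ h l j = l * h + j := by rw [fE, if_pos hjh]
    rw [hv]
    unfold gE
    rw [if_pos (by omega), ncDivH hjh, ncModH hjh]
  · obtain ⟨j', rfl⟩ : ∃ j', j = h + j' := ⟨j - h, by omega⟩
    have hj' : j' < h := by omega
    have hv : fE n₁ h l (h + j') = n₁ * h + (l * h + j') := by
      rw [fE, if_neg hjh]
      congr 2
      omega
    rw [hv]
    unfold gE
    rw [if_neg (by omega)]
    have e3 : n₁ * h + (l * h + j') - n₁ * h = l * h + j' := by omega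
    rw [e3, ncDivH hj', ncModH hj']

lemma fE_bounds (h1 : 1 ≤ n₁) (hh : 1 ≤ h) {l j : ℕ} (hl : l < n₁) (hj : j < 2 * h) :
    (l * h ≤ fE n₁ h l j ∧ fE n₁ h l j ≤ l * h + (n₁ * h + h - 1)) ∧
    ((if j < h then j else n₁ * h + (j - h)) ≤ fE n₁ h l j ∧
      fE n₁ h l j ≤ (if j < h then j else n₁ * h + (j - h)) + (n₁ * h + h - 1)) := by
  have e2 : l * h + h ≤ n₁ * h := by
    calc l * h + h = (l + 1) * h := by ring
    _ ≤ n₁ * h := Nat.mul_le_mul_right _ (by omega)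
  unfold fE
  split_ifs with hjh <;> refine ⟨⟨?_, ?_⟩, ?_, ?_⟩ <;> omega

end EvenCase

/-- arrangement for odd number of rows `2m+1` and odd number of columns `2h+1`. -/
def fO (m h l j : ℕ) : ℕ :=
  if j < h then (if l < m then l * h + j else l * h + j + (m + 1))
  else if j = 2 * h then (if l ≤ m then m * h + l else 3 * (m * h) + 2 * h + (l - m))
  else if l < m then 2 * (m * h) + (l * h) + j + (m + 1)
  else if l = m then
    (if j + m < 2 * h then 3 * (m * h) + j + (m + 1) else 3 * (m * h) + j + (2 * m + 1))
  else 2 * (m * h) + (l * h) + j + (2 * m + 1)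

def gO (m h v : ℕ) : ℕ × ℕ :=
  if v < m * h then (v / h, v % h)
  else if v ≤ m * h + m then (v - m * h, 2 * h)
  else if v ≤ 2 * (m * h) + h + m then ((v - (m + 1)) / h, (v - (m + 1)) % h)
  else if v ≤ 3 * (m * h) + h + m then
    ((v - (2 * (m * h) + h + (m + 1))) / h, h + (v - (2 * (m * h) + h + (m + 1))) % h)
  else if v ≤ 3 * (m * h) + 2 * h then (m, h + (v - (3 * (m * h) + h + (m + 1))))
  else if v ≤ 3 * (m * h) + 2 * h + m then (m + (v - (3 * (m * h) + 2 * h)), 2 * h)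
  else if v ≤ 3 * (m * h) + 2 * h + 2 * m then (m, h + (v - (3 * (m * h) + h + (2 * m + 1))))
  else ((v - (2 * (m * h) + h + (2 * m + 1))) / h, h + (v - (2 * (m * h) + h + (2 * m + 1))) % h)

section OddCase
variable {m h : ℕ}

lemma gO_fO (hm : 1 ≤ m) (hmh : m ≤ h) {l j : ℕ} (hl : l < 2 * m + 1) (hj : j < 2 * h + 1) :
    gO m h (fO m h l j) = (l, j) := by
  have hh : 1 ≤ h := le_trans hm hmh
  have hmm : m ≤ m * h := by calc m = m * 1 := by ring
                                 _ ≤ m * h := Nat.mul_le_mul_left _ hh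
  by_cases hjh : j < h
  · by_cases hlm : l < m
    · -- R1
      have hmul : l * h + h ≤ m * h := by
        calc l * h + h = (l + 1) * h := by ring
        _ ≤ m * h := Nat.mul_le_mul_right _ (by omega)
      have hv : fO m h l j = l * h + j := by rw [fO, if_pos hjh, if_pos hlm]
      rw [hv, gO, if_pos (by omega), ncDivH hjh, ncModH hjh]
    · -- R2
      have hmul1 : m * h ≤ l * h := Nat.mul_le_mul_right _ (by omega)
      have hmul2 : l * h ≤ 2 * (m * h) := by
        calc l * h ≤ (2 * m) * h := Nat.mul_le_mul_right _ (by omega)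
        _ = 2 * (m * h) := by ring
      have hv : fO m h l j = l * h + j + (m + 1) := by rw [fO, if_pos hjh, if_neg hlm]
      rw [hv, gO, if_neg (by omega), if_neg (by omega), if_pos (by omega)]
      have e : l * h + j + (m + 1) - (m + 1) = l * h + j := by omega
      rw [e, ncDivH hjh, ncModH hjh]
  · by_cases hj2 : j = 2 * h
    · subst hj2
      by_cases hlm : l ≤ m
      · -- R6
        have hv : fO m h l (2 * h) = m * h + l := by
          rw [fO, if_neg (by omega), if_pos rfl, if_pos hlm]
        rw [hv, gO, if_neg (by omega), if_pos (by omega)]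
        have e : m * h + l - m * h = l := by omega
        rw [e]
      · -- R7
        have hv : fO m h l (2 * h) = 3 * (m * h) + 2 * h + (l - m) := by
          rw [fO, if_neg (by omega), if_pos rfl, if_neg hlm]
        rw [hv, gO, if_neg (by omega), if_neg (by omega), if_neg (by omega), if_neg (by omega),
          if_neg (by omega), if_pos (by omega)]
        have e : m + (3 * (m * h) + 2 * h + (l - m) - (3 * (m * h) + 2 * h)) = l := by omega
        rw [e]
    · -- middle columns h ≤ j < 2h
      obtain ⟨j', rfl⟩ : ∃ j', j = h + j' := ⟨j - h, by omega⟩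
      have hj' : j' < h := by omega
      by_cases hlm : l < m
      · -- R3
        have hmul : l * h + h ≤ m * h := by
          calc l * h + h = (l + 1) * h := by ring
          _ ≤ m * h := Nat.mul_le_mul_right _ (by omega)
        have hv : fO m h l (h + j') = 2 * (m * h) + (l * h) + (h + j') + (m + 1) := by
          rw [fO, if_neg hjh, if_neg hj2, if_pos hlm]
        rw [hv, gO, if_neg (by omega), if_neg (by omega), if_neg (by omega), if_pos (by omega)]
        have e : 2 * (m * h) + (l * h) + (h + j') + (m + 1) - (2 * (m * h) + h + (m + 1))
            = l * h + j' := by omega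
        rw [e, ncDivH hj', ncModH hj']
      · by_cases hle : l = m
        · subst hle
          by_cases hjm : (h + j') + l < 2 * h
          · -- R4a
            have hv : fO l h l (h + j') = 3 * (l * h) + (h + j') + (l + 1) := by
              rw [fO, if_neg hjh, if_neg hj2, if_neg hlm, if_pos rfl, if_pos hjm]
            rw [hv, gO, if_neg (by omega), if_neg (by omega), if_neg (by omega),
              if_neg (by omega), if_pos (by omega)]
            have e : h + (3 * (l * h) + (h + j') + (l + 1) - (3 * (l * h) + h + (l + 1)))
                = h + j' := by omega
            rw [e]
          · -- R4b
            have hv : fO l h l (h + j') = 3 * (l * h) + (h + j') + (2 * l + 1) := by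
              rw [fO, if_neg hjh, if_neg hj2, if_neg hlm, if_pos rfl, if_neg hjm]
            rw [hv, gO, if_neg (by omega), if_neg (by omega), if_neg (by omega),
              if_neg (by omega), if_neg (by omega), if_neg (by omega), if_pos (by omega)]
            have e : h + (3 * (l * h) + (h + j') + (2 * l + 1) - (3 * (l * h) + h + (2 * l + 1)))
                = h + j' := by omega
            rw [e]
        · -- R5
          have hmul1 : m * h + h ≤ l * h := by
            calc m * h + h = (m + 1) * h := by ring
            _ ≤ l * h := Nat.mul_le_mul_right _ (by omega)
          have hmul2 : l * h ≤ 2 * (m * h) := by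
            calc l * h ≤ (2 * m) * h := Nat.mul_le_mul_right _ (by omega)
            _ = 2 * (m * h) := by ring
          have hv : fO m h l (h + j') = 2 * (m * h) + (l * h) + (h + j') + (2 * m + 1) := by
            rw [fO, if_neg hjh, if_neg hj2, if_neg hlm, if_neg hle]
          rw [hv, gO, if_neg (by omega), if_neg (by omega), if_neg (by omega),
            if_neg (by omega), if_neg (by omega), if_neg (by omega), if_neg (by omega)]
          have e : 2 * (m * h) + (l * h) + (h + j') + (2 * m + 1)
              - (2 * (m * h) + h + (2 * m + 1)) = l * h + j' := by omega
          rw [e, ncDivH hj', ncModH hj']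

def rminO (m h l : ℕ) : ℕ :=
  if l < m then l * h else if l = m then m * h + m else l * h + (m + 1)

def cminO (m h j : ℕ) : ℕ :=
  if j < h then j else if j = 2 * h then m * h else 2 * (m * h) + j + (m + 1)

lemma fO_bounds (hm : 1 ≤ m) (hmh : m ≤ h) {l j : ℕ} (hl : l < 2 * m + 1) (hj : j < 2 * h + 1) :
    (rminO m h l ≤ fO m h l j ∧ fO m h l j ≤ rminO m h l + (2 * (m * h) + 2 * h + m)) ∧
    (cminO m h j ≤ fO m h l j ∧ fO m h l j ≤ cminO m h j + (2 * (m * h) + 2 * h + m)) ∧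
    fO m h l j < (2 * m + 1) * (2 * h + 1) := by
  have hh : 1 ≤ h := le_trans hm hmh
  have hmm : m ≤ m * h := by calc m = m * 1 := by ring
                                 _ ≤ m * h := Nat.mul_le_mul_left _ hh
  have hN : (2 * m + 1) * (2 * h + 1) = 4 * (m * h) + 2 * m + 2 * h + 1 := by ring
  have hcase : l < m ∨ l = m ∨ (m < l ∧ l ≤ 2 * m) := by omega
  rcases hcase with hlm | hlm | ⟨hlm1, hlm2⟩
  · have hmul : l * h + h ≤ m * h := by
      calc l * h + h = (l + 1) * h := by ring
      _ ≤ m * h := Nat.mul_le_mul_right _ (by omega)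
    rw [fO, rminO, cminO, if_pos hlm]
    split_ifs <;> refine ⟨⟨?_, ?_⟩, ⟨?_, ?_⟩, ?_⟩ <;> omega
  · subst hlm
    rw [fO, rminO, cminO, if_neg (by omega), if_pos rfl]
    split_ifs <;> refine ⟨⟨?_, ?_⟩, ⟨?_, ?_⟩, ?_⟩ <;> omega
  · have hmul1 : m * h + h ≤ l * h := by
      calc m * h + h = (m + 1) * h := by ring
      _ ≤ l * h := Nat.mul_le_mul_right _ (by omega)
    have hmul2 : l * h ≤ 2 * (m * h) := by
      calc l * h ≤ (2 * m) * h := Nat.mul_le_mul_right _ (by omega)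
      _ = 2 * (m * h) := by ring
    rw [fO, rminO, cminO, if_neg (by omega), if_neg (by omega)]
    split_ifs <;> refine ⟨⟨?_, ?_⟩, ⟨?_, ?_⟩, ?_⟩ <;> omega

end OddCase

/-- If `n₁ ≤ n₂` and `n₁` is odd, there is an arrangement of the `n₁ × n₂`
matrix achieving spread exactly `(n₁+1)n₂/2 − 1`. -/
theorem exists_spread2_odd (n₁ n₂ : ℕ) (h₁ : 1 ≤ n₁) (h₂ : 1 ≤ n₂)
    (hle : n₁ ≤ n₂) (hodd : Odd n₁) :
    ∃ A : Fin n₁ × Fin n₂ ≃ Fin (n₁ * n₂),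
      spread2 A = (n₁ + 1) * n₂ / 2 - 1 := by
  obtain ⟨m, hm⟩ := hodd
  rcases Nat.even_or_odd n₂ with he | ho
  · -- n₂ even
    obtain ⟨h, hh⟩ := he
    have hn2 : n₂ = 2 * h := by omega
    subst hn2
    have hh1 : 1 ≤ h := by omega
    have hS : (n₁ + 1) * (2 * h) / 2 - 1 = n₁ * h + h - 1 := by
      have e : (n₁ + 1) * (2 * h) = 2 * (n₁ * h + h) := by ring
      omega
    rw [hS]
    have hz : (0 : ℕ) * h = 0 := by ring
    refine exists_arrangement n₁ (2 * h) (n₁ * h + h - 1) (fE n₁ h) (gE n₁ h)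
      (fun l => l * h) (fun j => if j < h then j else n₁ * h + (j - h))
      (fun l j hl hj => fE_lt h₁ hh1 hl hj) (fun l j hl hj => gE_fE h₁ hh1 hl hj)
      (fun l j hl hj => ((fE_bounds h₁ hh1 hl hj).1).1)
      (fun l j hl hj => ((fE_bounds h₁ hh1 hl hj).1).2)
      (fun l j hl hj => ((fE_bounds h₁ hh1 hl hj).2).1)
      (fun l j hl hj => ((fE_bounds h₁ hh1 hl hj).2).2)
      0 0 (2 * h - 1) (by omega) (by omega) (by omega) ?_
    have e1 : fE n₁ h 0 0 = 0 := by rw [fE, if_pos (by omega)]; omega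
    have e2 : fE n₁ h 0 (2 * h - 1) = n₁ * h + (h - 1) := by
      rw [fE, if_neg (by omega)]
      omega
    rw [e1, e2]
    omega
  · -- n₂ odd
    obtain ⟨h, hh⟩ := ho
    subst hh
    by_cases hm0 : m = 0
    · -- n₁ = 1
      have hn1 : n₁ = 1 := by omega
      subst hn1
      have hS : (1 + 1) * (2 * h + 1) / 2 - 1 = 2 * h := by omega
      rw [hS]
      refine exists_arrangement 1 (2 * h + 1) (2 * h) (fun _ j => j) (fun v => (0, v))
        (fun _ => 0) (fun j => j)
        (fun l j hl hj => by omega) ?_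
        (fun l j hl hj => by omega) (fun l j hl hj => by omega)
        (fun l j hl hj => by omega) (fun l j hl hj => by omega)
        0 0 (2 * h) (by omega) (by omega) (by omega) (by omega)
      intro l j hl hj
      have : l = 0 := by omega
      subst this
      rfl
    · -- n₁ = 2m+1 with m ≥ 1
      have hm1 : 1 ≤ m := by omega
      have hmh : m ≤ h := by omega
      subst hm
      have hh1 : 1 ≤ h := by omega
      have hS : (2 * m + 1 + 1) * (2 * h + 1) / 2 - 1 = 2 * (m * h) + 2 * h + m := by
        have e : (2 * m + 1 + 1) * (2 * h + 1) = 2 * (2 * (m * h) + 2 * h + m + 1) := by ring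
        omega
      rw [hS]
      have hz : (0 : ℕ) * h = 0 := by ring
      refine exists_arrangement (2 * m + 1) (2 * h + 1) (2 * (m * h) + 2 * h + m)
        (fO m h) (gO m h) (rminO m h) (cminO m h)
        (fun l j hl hj => (fO_bounds hm1 hmh hl hj).2.2)
        (fun l j hl hj => gO_fO hm1 hmh hl hj)
        (fun l j hl hj => ((fO_bounds hm1 hmh hl hj).1).1)
        (fun l j hl hj => ((fO_bounds hm1 hmh hl hj).1).2)
        (fun l j hl hj => ((fO_bounds hm1 hmh hl hj).2).1.1)
        (fun l j hl hj => ((fO_bounds hm1 hmh hl hj).2).1.2)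
        0 0 (2 * h - 1) (by omega) (by omega) (by omega) ?_
      have e1 : fO m h 0 0 = 0 := by
        rw [fO, if_pos (by omega), if_pos (by omega)]
        omega
      have e2 : fO m h 0 (2 * h - 1) = 2 * (m * h) + 2 * h + m := by
        rw [fO, if_neg (by omega), if_neg (by omega), if_pos (by omega)]
        omega
      rw [e1, e2]
      omega
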